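/- Let $p_1 \ge p_2 \ge \cdots \ge p_{N_1} > 0$ and $p = \sum_{i=1}^{N_1} p_i$. For a $k$-tuple $I = (i_1,\ldots,i_k)$ of distinct indices, define $w(I) = \frac{\prod_{j=1}^{k} p_{i_j}}{\prod_{h=0}^{k-1}\left(p - \sum_{j=1}^{h} p_{i_j}\right)}$. Then $w(1,2,\ldots,k) \ge w(I)$ for every $k$-tuple $I$ of distinct indices from $\{1,\ldots,N_1\}$. -/

import Mathlib

/-- `w(I) = (∏_{j=1}^k p_{i_j}) / ∏_{h=0}^{k-1} (p - ∑_{j=1}^{h} p_{i_j})`, the probability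
that the first `k` parasitized hosts are `i_1, …, i_k`, in that order. -/
noncomputable def wOrd {N₁ : ℕ} (p : Fin N₁ → ℝ) {k : ℕ} (f : Fin k → Fin N₁) : ℝ :=
  (∏ j : Fin k, p (f j)) /
    ∏ h : Fin k, ((∑ i, p i) - ∑ j ∈ Finset.univ.filter (fun j : Fin k => j < h), p (f j))

/-- The increasing tuple `(1, 2, …, k)`. -/
def idTup (k N₁ : ℕ) (hk : k ≤ N₁) : Fin k → Fin N₁ := fun j => Fin.castLE hk j

lemma le_of_strictMono_fin {m n : ℕ} {v : Fin m → Fin n} (hv : StrictMono v) :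
    ∀ j : Fin m, (j : ℕ) ≤ (v j : ℕ) := by
  intro j
  obtain ⟨jv, hj⟩ := j
  induction jv with
  | zero => exact Nat.zero_le _
  | succ i ih =>
    have hi : i < m := Nat.lt_of_succ_lt hj
    have h1 : (v ⟨i, hi⟩ : ℕ) < (v ⟨i+1, hj⟩ : ℕ) := hv (by simp [Fin.lt_def])
    have h2 : (i : ℕ) ≤ (v ⟨i, hi⟩ : ℕ) := by simpa using ih hi
    show i + 1 ≤ _
    omega

/-- The sum of `p` over any `m` distinct indices is at most the sum over the first `m`. -/
lemma sum_le_top {N₁ : ℕ} (p : Fin N₁ → ℝ)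
    (hmono : ∀ i j : Fin N₁, i ≤ j → p j ≤ p i)
    {m : ℕ} (hm : m ≤ N₁) (u : Fin m → Fin N₁) (hu : Function.Injective u) :
    ∑ j : Fin m, p (u j) ≤ ∑ j : Fin m, p (Fin.castLE hm j) := by
  set A : Finset (Fin N₁) := Finset.univ.image u with hA
  have hcard : A.card = m := by
    rw [hA, Finset.card_image_of_injective _ hu, Finset.card_univ, Fintype.card_fin]
  set e := A.orderEmbOfFin hcard with he
  have himg : Finset.univ.image (e : Fin m → Fin N₁) = A := by
    apply Finset.coe_injective
    rw [Finset.coe_image, Finset.coe_univ, Set.image_univ]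
    exact A.range_orderEmbOfFin hcard
  have h1 : ∑ j : Fin m, p (u j) = ∑ a ∈ A, p a := by
    rw [hA, Finset.sum_image (fun x _ y _ h => hu h)]
  have h2 : ∑ a ∈ A, p a = ∑ j : Fin m, p (e j) := by
    rw [← himg, Finset.sum_image (fun x _ y _ h => e.injective h)]
  rw [h1, h2]
  apply Finset.sum_le_sum
  intro j _
  exact hmono _ _
    (Fin.mk_le_of_le_val (le_of_strictMono_fin (A.orderEmbOfFin hcard).strictMono j))

/-- The product of `p` over any `m` distinct indices is at most the product over the first `m`. -/
lemma prod_le_top {N₁ : ℕ} (p : Fin N₁ → ℝ) (hpos : ∀ i, 0 < p i)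
    (hmono : ∀ i j : Fin N₁, i ≤ j → p j ≤ p i)
    {m : ℕ} (hm : m ≤ N₁) (u : Fin m → Fin N₁) (hu : Function.Injective u) :
    ∏ j : Fin m, p (u j) ≤ ∏ j : Fin m, p (Fin.castLE hm j) := by
  set A : Finset (Fin N₁) := Finset.univ.image u with hA
  have hcard : A.card = m := by
    rw [hA, Finset.card_image_of_injective _ hu, Finset.card_univ, Fintype.card_fin]
  set e := A.orderEmbOfFin hcard with he
  have himg : Finset.univ.image (e : Fin m → Fin N₁) = A := by
    apply Finset.coe_injective
    rw [Finset.coe_image, Finset.coe_univ, Set.image_univ]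
    exact A.range_orderEmbOfFin hcard
  have h1 : ∏ j : Fin m, p (u j) = ∏ a ∈ A, p a := by
    rw [hA, Finset.prod_image (fun x _ y _ h => hu h)]
  have h2 : ∏ a ∈ A, p a = ∏ j : Fin m, p (e j) := by
    rw [← himg, Finset.prod_image (fun x _ y _ h => e.injective h)]
  rw [h1, h2]
  apply Finset.prod_le_prod
  · intro j _; exact (hpos _).le
  · intro j _
    exact hmono _ _
      (Fin.mk_le_of_le_val (le_of_strictMono_fin (A.orderEmbOfFin hcard).strictMono j))

lemma filter_sum {k : ℕ} (h : Fin k) (q : Fin k → ℝ) :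
    ∑ j ∈ Finset.univ.filter (fun j : Fin k => j < h), q j
      = ∑ j : Fin h.val, q (Fin.castLE h.isLt.le j) := by
  refine Finset.sum_bij' (i := fun j hj => (⟨j.val, ?_⟩ : Fin h.val))
    (j := fun j _ => Fin.castLE h.isLt.le j) ?_ ?_ ?_ ?_ ?_
  · exact (Finset.mem_filter.mp hj).2
  · intro a ha; exact Finset.mem_univ _
  · intro a ha
    simp only [Finset.mem_filter, Finset.mem_univ, true_and, Fin.lt_def]
    exact a.isLt
  · intro a ha; rfl
  · intro a ha; rfl
  · intro a ha; rfl

/-- Proposition 4.3 (mode): if `p_1 ≥ p_2 ≥ ⋯ ≥ p_{N₁} > 0`, the identity ordering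
`(1, 2, …, k)` maximizes `w` over all `k`-tuples of distinct indices. -/
theorem stmt_16 (N₁ k : ℕ) (hk : 1 ≤ k) (hkN : k ≤ N₁) (p : Fin N₁ → ℝ)
    (hpos : ∀ i, 0 < p i) (hmono : ∀ i j : Fin N₁, i ≤ j → p j ≤ p i)
    (f : Fin k → Fin N₁) (hf : Function.Injective f) :
    wOrd p f ≤ wOrd p (idTup k N₁ hkN) := by
  -- for any injective g, the partial sums are strictly below the total
  have key : ∀ (g : Fin k → Fin N₁), Function.Injective g → ∀ h : Fin k,
      ∑ j ∈ Finset.univ.filter (fun j : Fin k => j < h), p (g j) < ∑ i, p i := by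
    intro g hg h
    have hsub : Finset.image (fun j : Fin h.val => g (Fin.castLE h.isLt.le j)) Finset.univ
        ⊆ Finset.univ := Finset.subset_univ _
    have hinj : Function.Injective (fun j : Fin h.val => g (Fin.castLE h.isLt.le j)) :=
      fun a b hab => Fin.castLE_injective _ (hg hab)
    have hcard : (Finset.image (fun j : Fin h.val => g (Fin.castLE h.isLt.le j))
        Finset.univ).card = h.val := by
      rw [Finset.card_image_of_injective _ hinj, Finset.card_univ, Fintype.card_fin]
    have hne : Finset.image (fun j : Fin h.val => g (Fin.castLE h.isLt.le j)) Finset.univ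
        ≠ Finset.univ := by
      intro hEq
      have : (Finset.univ : Finset (Fin N₁)).card = h.val := by rw [← hEq, hcard]
      rw [Finset.card_univ, Fintype.card_fin] at this
      have := h.isLt
      omega
    obtain ⟨x, hxu, hxn⟩ := Finset.exists_of_ssubset (hsub.ssubset_of_ne hne)
    calc ∑ j ∈ Finset.univ.filter (fun j : Fin k => j < h), p (g j)
        = ∑ j : Fin h.val, p (g (Fin.castLE h.isLt.le j)) := filter_sum h (fun j => p (g j))
      _ = ∑ a ∈ Finset.image (fun j : Fin h.val => g (Fin.castLE h.isLt.le j)) Finset.univ,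
            p a := (Finset.sum_image (fun x _ y _ hxy => hinj hxy)).symm
      _ < ∑ i, p i := by
          apply Finset.sum_lt_sum_of_subset hsub hxu hxn (hpos x)
          intro i _ _; exact (hpos i).le
  have hid : Function.Injective (idTup k N₁ hkN) := fun a b hab =>
    Fin.castLE_injective hkN hab
  -- positivity of denominator factors
  have hDienpos : ∀ (g : Fin k → Fin N₁), Function.Injective g → ∀ h : Fin k,
      0 < (∑ i, p i) - ∑ j ∈ Finset.univ.filter (fun j : Fin k => j < h), p (g j) :=
    fun g hg h => sub_pos.mpr (key g hg h)
  have hDf : 0 < ∏ h : Fin k,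
      ((∑ i, p i) - ∑ j ∈ Finset.univ.filter (fun j : Fin k => j < h), p (f j)) :=
    Finset.prod_pos (fun h _ => hDienpos f hf h)
  have hDid : 0 < ∏ h : Fin k,
      ((∑ i, p i) - ∑ j ∈ Finset.univ.filter (fun j : Fin k => j < h), p (idTup k N₁ hkN j)) :=
    Finset.prod_pos (fun h _ => hDienpos _ hid h)
  -- denominator comparison: id's denominator is termwise ≤ f's
  have hDle : ∏ h : Fin k,
      ((∑ i, p i) - ∑ j ∈ Finset.univ.filter (fun j : Fin k => j < h), p (idTup k N₁ hkN j))
      ≤ ∏ h : Fin k,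
      ((∑ i, p i) - ∑ j ∈ Finset.univ.filter (fun j : Fin k => j < h), p (f j)) := by
    apply Finset.prod_le_prod
    · intro h _; exact (hDienpos _ hid h).le
    · intro h _
      apply sub_le_sub_left
      rw [filter_sum h (fun j => p (f j)), filter_sum h (fun j => p (idTup k N₁ hkN j))]
      have hm : h.val ≤ N₁ := le_trans h.isLt.le hkN
      have := sum_le_top p hmono hm (fun j : Fin h.val => f (Fin.castLE h.isLt.le j))
        (fun a b hab => Fin.castLE_injective _ (hf hab))
      convert this using 2
      all_goals rfl
  -- numerator comparison
  have hNle : ∏ j : Fin k, p (f j) ≤ ∏ j : Fin k, p (idTup k N₁ hkN j) :=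
    prod_le_top p hpos hmono hkN f hf
  have hNf : 0 ≤ ∏ j : Fin k, p (f j) :=
    Finset.prod_nonneg (fun j _ => (hpos _).le)
  unfold wOrd
  exact div_le_div₀ (Finset.prod_nonneg (fun j _ => (hpos _).le)) hNle hDid hDle
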